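/- Let u and v be odd integers. Then the pair (u,v) is isotropic over ℚ₂ (i.e. there exists (x,y,z) ∈ ℚ₂³ with (x,y,z) ≠ (0,0,0) and z² = u·x² + v·y²) if and only if u ≡ 1 (mod 4) or v ≡ 1 (mod 4). Equivalently, the 2-adic Hilbert symbol of two odd integers u, v equals (−1)^{((u−1)/2)·((v−1)/2)}. -/

import Mathlib

/-- Any integer congruent to `1` mod `8` is a square in `ℚ₂` (Hensel's lemma). -/
lemma sq_of_mod8 (c : ℤ) (hc : c % 8 = 1) : ∃ z : ℚ_[2], z ^ 2 = (c : ℚ_[2]) := by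
  obtain ⟨k, hk⟩ : (8:ℤ) ∣ 1 - c := by omega
  set F : Polynomial ℤ_[2] := Polynomial.X ^ 2 - Polynomial.C (c : ℤ_[2]) with hF
  have heval : F.eval 1 = 1 - (c : ℤ_[2]) := by simp [hF]
  have hderiv : F.derivative.eval 1 = 2 := by simp [hF]; norm_num
  have h2 : ‖(2 : ℤ_[2])‖ = 1/2 := by
    have := @PadicInt.norm_p 2 ⟨Nat.prime_two⟩
    simpa using this
  have hnorm : ‖F.eval 1‖ < ‖F.derivative.eval 1‖ ^ 2 := by
    rw [heval, hderiv, h2]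
    have hsplit : (1 - (c : ℤ_[2])) = 2^3 * ((k : ℤ) : ℤ_[2]) := by
      have : ((1 - c : ℤ) : ℤ_[2]) = ((8 * k : ℤ) : ℤ_[2]) := by rw [← hk]
      push_cast at this
      linear_combination this
    rw [hsplit]
    calc ‖(2:ℤ_[2])^3 * ((k : ℤ) : ℤ_[2])‖ = ‖(2:ℤ_[2])^3‖ * ‖((k : ℤ) : ℤ_[2])‖ :=
          norm_mul _ _
      _ ≤ (1/2)^3 * 1 := by
          rw [norm_pow, h2]
          exact mul_le_mul_of_nonneg_left (PadicInt.norm_le_one _) (by norm_num)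
      _ < (1/2)^2 := by norm_num
  obtain ⟨z, hz, -⟩ := hensels_lemma hnorm
  have hz2 : z ^ 2 = (c : ℤ_[2]) := by
    have := hz
    simp only [hF, Polynomial.coe_aeval_eq_eval, Polynomial.eval_sub, Polynomial.eval_pow, Polynomial.eval_X,
      Polynomial.eval_C, sub_eq_zero] at this
    exact this
  exact ⟨(z : ℚ_[2]), by exact_mod_cast congrArg (PadicInt.Coe.ringHom) hz2⟩

lemma zmod4_squares : ∀ a b c : ZMod 4, a^2 + b^2 + c^2 = 0 → a^2 = 0 ∧ b^2 = 0 ∧ c^2 = 0 := by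
  decide

lemma cast_zmod4 {u : ℤ} (h : u % 4 = 3) :
    PadicInt.toZModPow (p := 2) 2 (u : ℤ_[2]) = 3 := by
  obtain ⟨k, hk⟩ : (4:ℤ) ∣ u - 3 := by omega
  have hu : (u : ℤ_[2]) = 3 + 4 * (k : ℤ_[2]) := by
    have : ((u - 3 : ℤ) : ℤ_[2]) = ((4 * k : ℤ) : ℤ_[2]) := by rw [hk]
    push_cast at this
    linear_combination this
  rw [hu]
  have h4 : PadicInt.toZModPow (p := 2) 2 (4 : ℤ_[2]) = 0 := by
    have h42 : (4 : ℤ_[2]) = ((2:ℕ) : ℤ_[2])^2 := by push_cast; norm_num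
    rw [h42, ← RingHom.mem_ker, PadicInt.ker_toZModPow, Ideal.mem_span_singleton]
  rw [map_add, map_mul, h4, zero_mul, add_zero]
  have : (3 : ℤ_[2]) = ((3:ℤ) : ℤ_[2]) := by push_cast; ring
  rw [this, map_intCast]
  decide

lemma norm_half_of_sq (X : ℤ_[2]) (h : (PadicInt.toZModPow (p := 2) 2 X) ^ 2 = 0) :
    ‖X‖ ≤ 1/2 := by
  have hker : (PadicInt.toZModPow (p := 2) 2) (X^2) = 0 := by rw [map_pow]; exact h
  have hmem : X^2 ∈ Ideal.span {((2:ℕ) : ℤ_[2]) ^ 2} := by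
    rw [← PadicInt.ker_toZModPow]; exact hker
  have hnorm : ‖X^2‖ ≤ ((2:ℕ):ℝ)^(-(2:ℕ):ℤ) :=
    (PadicInt.norm_le_pow_iff_mem_span_pow (X^2) 2).mpr hmem
  rw [norm_pow] at hnorm
  have h14 : ((2:ℕ):ℝ)^(-(2:ℕ):ℤ) = 1/4 := by norm_num
  rw [h14] at hnorm
  nlinarith [hnorm, norm_nonneg X]

lemma descent_step (u v : ℤ) (hu : u % 4 = 3) (hv : v % 4 = 3) (x y z : ℚ_[2])
    (hx : ‖x‖ ≤ 1) (hy : ‖y‖ ≤ 1) (hz : ‖z‖ ≤ 1)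
    (heq : z ^ 2 = (u : ℚ_[2]) * x ^ 2 + (v : ℚ_[2]) * y ^ 2) :
    ‖x‖ ≤ 1/2 ∧ ‖y‖ ≤ 1/2 ∧ ‖z‖ ≤ 1/2 := by
  set X : ℤ_[2] := ⟨x, hx⟩ with hX
  set Y : ℤ_[2] := ⟨y, hy⟩ with hY
  set Z : ℤ_[2] := ⟨z, hz⟩ with hZ
  have hEQ : Z ^ 2 = (u : ℤ_[2]) * X ^ 2 + (v : ℤ_[2]) * Y ^ 2 := by
    apply Subtype.coe_injective
    push_cast
    exact heq
  set φ := PadicInt.toZModPow (p := 2) 2 with hφ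
  have hzmod : φ Z ^ 2 = 3 * (φ X) ^ 2 + 3 * (φ Y) ^ 2 := by
    have := congrArg φ hEQ
    rw [map_add, map_mul, map_mul, map_pow, map_pow, map_pow, cast_zmod4 hu,
      cast_zmod4 hv] at this
    exact this
  have hsum : (φ X) ^ 2 + (φ Y) ^ 2 + (φ Z) ^ 2 = 0 := by
    have h3 : (3 : ZMod (2^2)) = -1 := by decide
    rw [h3] at hzmod
    linear_combination hzmod
  obtain ⟨hx0, hy0, hz0⟩ := zmod4_squares (φ X) (φ Y) (φ Z) hsum
  exact ⟨norm_half_of_sq X hx0, norm_half_of_sq Y hy0, norm_half_of_sq Z hz0⟩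

lemma no_solution (u v : ℤ) (hu : u % 4 = 3) (hv : v % 4 = 3) :
    ¬ ∃ x y z : ℚ_[2], (x, y, z) ≠ (0, 0, 0) ∧
      z ^ 2 = (u : ℚ_[2]) * x ^ 2 + (v : ℚ_[2]) * y ^ 2 := by
  rintro ⟨x, y, z, hne, heq⟩
  have key : ∀ w : ℚ_[2], w ≠ 0 → ‖x‖ ≤ ‖w‖ → ‖y‖ ≤ ‖w‖ → ‖z‖ ≤ ‖w‖ →
      ‖x‖ ≤ ‖w‖/2 ∧ ‖y‖ ≤ ‖w‖/2 ∧ ‖z‖ ≤ ‖w‖/2 := by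
    intro w hw h1 h2 h3
    have hwpos : (0:ℝ) < ‖w‖ := norm_pos_iff.mpr hw
    have heq' : (z/w) ^ 2 = (u : ℚ_[2]) * (x/w) ^ 2 + (v : ℚ_[2]) * (y/w) ^ 2 := by
      field_simp
      linear_combination heq
    have h1' : ‖x/w‖ ≤ 1 := by rw [norm_div]; exact div_le_one_of_le₀ h1 (norm_nonneg w)
    have h2' : ‖y/w‖ ≤ 1 := by rw [norm_div]; exact div_le_one_of_le₀ h2 (norm_nonneg w)
    have h3' : ‖z/w‖ ≤ 1 := by rw [norm_div]; exact div_le_one_of_le₀ h3 (norm_nonneg w)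
    obtain ⟨d1, d2, d3⟩ := descent_step u v hu hv _ _ _ h1' h2' h3' heq'
    rw [norm_div, div_le_iff₀ hwpos] at d1 d2 d3
    constructor
    · nlinarith
    constructor
    · nlinarith
    · nlinarith
  have hmax : ∃ w : ℚ_[2], (w = x ∨ w = y ∨ w = z) ∧ ‖x‖ ≤ ‖w‖ ∧ ‖y‖ ≤ ‖w‖ ∧ ‖z‖ ≤ ‖w‖ := by
    rcases le_total ‖x‖ ‖y‖ with h | h
    · rcases le_total ‖y‖ ‖z‖ with h' | h'
      · exact ⟨z, Or.inr (Or.inr rfl), h.trans h', h', le_refl _⟩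
      · exact ⟨y, Or.inr (Or.inl rfl), h, le_refl _, h'⟩
    · rcases le_total ‖x‖ ‖z‖ with h'' | h''
      · exact ⟨z, Or.inr (Or.inr rfl), h'', h.trans h'', le_refl _⟩
      · exact ⟨x, Or.inl rfl, le_refl _, h, h''⟩
  obtain ⟨w, hw_eq, h1, h2, h3⟩ := hmax
  have hw0 : w ≠ 0 := by
    rintro rfl
    simp only [norm_zero] at h1 h2 h3
    apply hne
    have hx0 : x = 0 := norm_le_zero_iff.mp h1
    have hy0 : y = 0 := norm_le_zero_iff.mp h2
    have hz0 : z = 0 := norm_le_zero_iff.mp h3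
    simp [hx0, hy0, hz0]
  obtain ⟨d1, d2, d3⟩ := key w hw0 h1 h2 h3
  have hwpos : (0:ℝ) < ‖w‖ := norm_pos_iff.mpr hw0
  rcases hw_eq with rfl | rfl | rfl
  · linarith
  · linarith
  · linarith

lemma has_solution (u v : ℤ) (hv : Odd v) (hu4 : u % 4 = 1) :
    ∃ x y z : ℚ_[2], (x, y, z) ≠ (0, 0, 0) ∧
      z ^ 2 = (u : ℚ_[2]) * x ^ 2 + (v : ℚ_[2]) * y ^ 2 := by
  rcases (by omega : u % 8 = 1 ∨ u % 8 = 5) with h8 | h8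
  · obtain ⟨z, hz⟩ := sq_of_mod8 u h8
    refine ⟨1, 0, z, by simp, ?_⟩
    rw [hz]; ring
  · obtain ⟨k, hk⟩ := hv
    have hc : (u + 4*v) % 8 = 1 := by omega
    obtain ⟨z, hz⟩ := sq_of_mod8 (u + 4*v) hc
    refine ⟨1, 2, z, by simp, ?_⟩
    push_cast at hz
    rw [hz]; ring

open Classical in
/-- For odd integers `u`, `v`, the pair `(u, v)` is isotropic over `ℚ₂` iff
`u ≡ 1 (mod 4)` or `v ≡ 1 (mod 4)`; equivalently, the 2-adic Hilbert symbol
of `u` and `v` equals `(−1)^{((u−1)/2)·((v−1)/2)}`. -/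
theorem hilbert_symbol_at_two (u v : ℤ) (hu : Odd u) (hv : Odd v) :
    ((∃ x y z : ℚ_[2], (x, y, z) ≠ (0, 0, 0) ∧
        z ^ 2 = (u : ℚ_[2]) * x ^ 2 + (v : ℚ_[2]) * y ^ 2)
      ↔ (u % 4 = 1 ∨ v % 4 = 1))
    ∧ ((if (∃ x y z : ℚ_[2], (x, y, z) ≠ (0, 0, 0) ∧
            z ^ 2 = (u : ℚ_[2]) * x ^ 2 + (v : ℚ_[2]) * y ^ 2)
          then (1 : ℚ) else -1)
        = (-1 : ℚ) ^ ((u - 1) / 2 * ((v - 1) / 2))) := by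
  obtain ⟨a, ha⟩ := hu
  obtain ⟨b, hb⟩ := hv
  have hiff : (∃ x y z : ℚ_[2], (x, y, z) ≠ (0, 0, 0) ∧
      z ^ 2 = (u : ℚ_[2]) * x ^ 2 + (v : ℚ_[2]) * y ^ 2) ↔ (u % 4 = 1 ∨ v % 4 = 1) := by
    constructor
    · intro h
      by_contra hc
      push_neg at hc
      have hu3 : u % 4 = 3 := by omega
      have hv3 : v % 4 = 3 := by omega
      exact no_solution u v hu3 hv3 h
    · rintro (h | h)
      · exact has_solution u v ⟨b, hb⟩ h
      · obtain ⟨x, y, z, hne, heq⟩ := has_solution v u ⟨a, ha⟩ h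
        refine ⟨y, x, z, ?_, by rw [heq]; ring⟩
        simp only [ne_eq, Prod.mk.injEq, not_and] at hne ⊢
        tauto
  refine ⟨hiff, ?_⟩
  by_cases hcond : u % 4 = 1 ∨ v % 4 = 1
  · rw [if_pos (hiff.mpr hcond)]
    have heven : Even ((u - 1) / 2 * ((v - 1) / 2)) := by
      rcases hcond with h | h
      · have : (u - 1) / 2 = 2 * ((u - 1) / 4) := by omega
        rw [this]
        exact (even_two_mul _).mul_right _
      · have : (v - 1) / 2 = 2 * ((v - 1) / 4) := by omega
        rw [this]
        exact (even_two_mul _).mul_left _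
    rw [heven.neg_one_zpow]
  · rw [if_neg (fun h => hcond (hiff.mp h))]
    push_neg at hcond
    have hu3 : u % 4 = 3 := by omega
    have hv3 : v % 4 = 3 := by omega
    have hodd : Odd ((u - 1) / 2 * ((v - 1) / 2)) := by
      refine Odd.mul ⟨(u - 3) / 4, by omega⟩ ⟨(v - 3) / 4, by omega⟩
    rw [hodd.neg_one_zpow]
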